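/- Let z be a complex number with z ≠ 1. For every integer n ≥ 1, the Apostol–Bernoulli number satisfies B_n(z) = n · Σ_{k=0}^{n−1} [(-1)^k k!/(z−1)^{k+1}] z^k S(n−1, k), where S denotes Stirling numbers of the second kind. -/

import Mathlib

open Finset Filter


/-- Stirling numbers of the second kind, via the standard recurrence. -/
def stirling : ℕ → ℕ → ℕ
  | 0, 0 => 1
  | 0, _ + 1 => 0
  | _ + 1, 0 => 0
  | n + 1, k + 1 => (k + 1) * stirling n (k + 1) + stirling n k

lemma stirling_eq_zero : ∀ m k : ℕ, m < k → stirling m k = 0 := by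
  intro m
  induction m with
  | zero => intro k hk; match k, hk with | k + 1, _ => rfl
  | succ m ih =>
    intro k hk
    match k, hk with
    | k + 1, hk =>
      show (k + 1) * stirling m (k + 1) + stirling m k = 0
      rw [ih (k+1) (by omega), ih k (by omega)]; ring

lemma alt_sum_choose (n : ℕ) (hn : n ≠ 0) :
    ∑ j ∈ range (n + 1), (-1 : ℂ) ^ j * (n.choose j : ℂ) = 0 := by
  have h := Int.alternating_sum_range_choose_of_ne hn
  have : ((∑ i ∈ range (n + 1), (-1 : ℤ) ^ i * (n.choose i : ℤ) : ℤ) : ℂ) = 0 := by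
    rw [h]; simp
  rw [← this]; push_cast; ring

noncomputable def T (m k : ℕ) : ℂ :=
  ∑ j ∈ range (k + 1), (-1 : ℂ) ^ (k + j) * (k.choose j : ℂ) * (j : ℂ) ^ m

lemma stirling_formula : ∀ m k : ℕ, (stirling m k : ℂ) * (k.factorial : ℂ) = T m k := by
  intro m
  induction m with
  | zero =>
    intro k
    match k with
    | 0 => simp [stirling, T]
    | k + 1 =>
      have : T 0 (k + 1) = (-1 : ℂ) ^ (k + 1) *
          ∑ j ∈ range (k + 2), (-1 : ℂ) ^ j * ((k+1).choose j : ℂ) := by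
        rw [T, Finset.mul_sum]
        refine Finset.sum_congr rfl fun j hj => ?_
        rw [pow_add]; ring
      rw [this, alt_sum_choose (k+1) (by omega)]
      show ((0 : ℕ) : ℂ) * _ = _
      simp
  | succ m ih =>
    intro k
    match k with
    | 0 =>
      show ((0 : ℕ) : ℂ) * _ = _
      simp [T, zero_pow (Nat.succ_ne_zero m)]
    | k + 1 =>
      have h1 : T m (k + 1)
          = ∑ i ∈ range (k + 1), (-1 : ℂ) ^ (k + i) * (((k+1).choose (i+1) : ℕ) : ℂ) * ((i:ℂ)+1) ^ m
            + (-1 : ℂ) ^ (k + 1) * (0 : ℂ) ^ m := by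
        rw [T, Finset.sum_range_succ']
        congr 1
        · refine Finset.sum_congr rfl fun i hi => ?_
          have hsg : (-1 : ℂ) ^ (k + 1 + (i + 1)) = (-1 : ℂ) ^ (k + i) := by
            rw [show k + 1 + (i + 1) = (k + i) + 2 by ring, pow_add]; norm_num
          rw [hsg]; push_cast; ring
        · simp
      have h3 : ∑ j ∈ range (k + 2), -((-1 : ℂ) ^ (k + j) * (k.choose j : ℂ) * (j : ℂ) ^ m)
          = -T m k := by
        rw [Finset.sum_range_succ, T, ← Finset.sum_neg_distrib]
        simp [Nat.choose_succ_self]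
      have h2 : ∑ i ∈ range (k + 1), (-1 : ℂ) ^ (k + i) * ((k.choose (i+1) : ℕ) : ℂ) * ((i:ℂ)+1) ^ m
            + (-1 : ℂ) ^ (k + 1) * (0 : ℂ) ^ m = -T m k := by
        rw [← h3]
        conv_rhs => rw [Finset.sum_range_succ']
        congr 1
        · refine Finset.sum_congr rfl fun i hi => ?_
          have hsg : -(-1 : ℂ) ^ (k + (i + 1)) = (-1 : ℂ) ^ (k + i) := by
            rw [show k + (i + 1) = (k + i) + 1 by ring, pow_succ]; ring
          rw [← hsg]; push_cast; ring
        · simp [pow_succ]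
      have h5 : ∑ i ∈ range (k + 1), (-1 : ℂ) ^ (k + i) * (((k+1).choose (i+1) : ℕ) : ℂ) * ((i:ℂ)+1) ^ m
          = ∑ i ∈ range (k + 1), (-1 : ℂ) ^ (k + i) * (k.choose i : ℂ) * ((i:ℂ)+1) ^ m
            + ∑ i ∈ range (k + 1), (-1 : ℂ) ^ (k + i) * ((k.choose (i+1) : ℕ) : ℂ) * ((i:ℂ)+1) ^ m := by
        rw [← Finset.sum_add_distrib]
        refine Finset.sum_congr rfl fun i hi => ?_
        rw [Nat.choose_succ_succ]; push_cast; ring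
      have hb : T m (k + 1) + T m k
          = ∑ i ∈ range (k + 1), (-1 : ℂ) ^ (k + i) * (k.choose i : ℂ) * ((i : ℂ) + 1) ^ m := by
        linear_combination h1 + h5 + h2
      have ha : T (m + 1) (k + 1)
          = ((k : ℂ) + 1) * ∑ i ∈ range (k + 1), (-1 : ℂ) ^ (k + i) * (k.choose i : ℂ) * ((i : ℂ) + 1) ^ m := by
        rw [T, Finset.sum_range_succ', Finset.mul_sum]
        have h0 : (-1 : ℂ) ^ (k + 1 + 0) * (((k+1).choose 0 : ℕ) : ℂ) * ((0:ℕ) : ℂ) ^ (m+1) = 0 := by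
          simp
        rw [h0, add_zero]
        refine Finset.sum_congr rfl fun i hi => ?_
        have hc : (((k+1).choose (i+1) : ℕ) : ℂ) * ((i : ℂ) + 1) = ((k : ℂ) + 1) * (k.choose i : ℂ) := by
          have h6 : (((k+1) * (k.choose i) : ℕ) : ℂ) = (((k+1).choose (i+1) * (i+1) : ℕ) : ℂ) := by
            rw [← Nat.add_one_mul_choose_eq]
          push_cast at h6
          linear_combination -h6
        have hs : (-1 : ℂ) ^ (k + 1 + (i + 1)) = (-1 : ℂ) ^ (k + i) := by
          rw [show k + 1 + (i + 1) = (k + i) + 2 by ring, pow_add]; norm_num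
        rw [hs]
        push_cast
        push_cast at hc
        calc (-1:ℂ) ^ (k+i) * ((k+1).choose (i+1) : ℂ) * ((i:ℂ)+1)^(m+1)
            = (-1:ℂ) ^ (k+i) * (((k+1).choose (i+1) : ℂ) * ((i:ℂ)+1)) * ((i:ℂ)+1)^m := by ring
          _ = _ := by rw [hc]; ring
      show (((k + 1) * stirling m (k + 1) + stirling m k : ℕ) : ℂ) * _ = _
      push_cast
      rw [ha, ← hb]
      have e1 := ih (k + 1)
      have e2 := ih k
      rw [Nat.factorial_succ] at e1 ⊢
      push_cast at e1 e2 ⊢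
      linear_combination ((k:ℂ)+1) * e1 + ((k:ℂ)+1) * e2

lemma exp_hasSum (y : ℂ) : HasSum (fun m : ℕ => y ^ m / (m.factorial : ℂ)) (Complex.exp y) := by
  rw [Complex.exp_eq_exp_ℂ]
  exact NormedSpace.expSeries_div_hasSum_exp y

lemma exp_sub_one_pow (x : ℂ) (k : ℕ) : (Complex.exp x - 1) ^ k
    = ∑ j ∈ range (k + 1), (-1 : ℂ) ^ (k + j) * (k.choose j : ℂ) * Complex.exp ((j : ℂ) * x) := by
  rw [sub_pow]
  refine Finset.sum_congr rfl fun j hj => ?_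
  rw [← Complex.exp_nat_mul, add_comm j k]
  ring

lemma egf (k : ℕ) (x : ℂ) :
    HasSum (fun m : ℕ => T m k * x ^ m / (m.factorial : ℂ)) ((Complex.exp x - 1) ^ k) := by
  rw [exp_sub_one_pow]
  have h : HasSum (fun m : ℕ => ∑ j ∈ range (k + 1),
      (-1 : ℂ) ^ (k + j) * (k.choose j : ℂ) * (((j : ℂ) * x) ^ m / (m.factorial : ℂ)))
      (∑ j ∈ range (k + 1), (-1 : ℂ) ^ (k + j) * (k.choose j : ℂ) * Complex.exp ((j : ℂ) * x)) :=
    hasSum_sum fun j _ => (exp_hasSum _).mul_left _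
  convert h using 2 with m
  rw [T, Finset.sum_mul, Finset.sum_div]
  refine Finset.sum_congr rfl fun j hj => ?_
  rw [mul_pow]
  ring


lemma egf' (k : ℕ) (x : ℂ) :
    HasSum (fun m : ℕ => ((stirling m k * k.factorial : ℕ) : ℂ) * x ^ m / (m.factorial : ℂ))
      ((Complex.exp x - 1) ^ k) := by
  refine (egf k x).congr_fun fun m => ?_
  rw [← stirling_formula m k]
  push_cast
  ring

lemma egfR (k : ℕ) (t : ℝ) :
    HasSum (fun m : ℕ => ((stirling m k * k.factorial : ℕ) : ℝ) * t ^ m / (m.factorial : ℝ))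
      ((Real.exp t - 1) ^ k) := by
  rw [← Complex.hasSum_ofReal]
  have h := egf' k (t : ℂ)
  have hv : ((((Real.exp t - 1) ^ k : ℝ)) : ℂ) = (Complex.exp (t : ℂ) - 1) ^ k := by
    push_cast [Complex.ofReal_exp]
    ring
  rw [hv]
  refine h.congr_fun fun m => ?_
  push_cast
  ring

lemma hasFPowerSeriesAt_of_eventually {c : ℕ → ℂ} {f : ℂ → ℂ}
    (h : ∀ᶠ x in nhds (0 : ℂ), HasSum (fun n => c n * x ^ n) (f x)) :
    HasFPowerSeriesAt f (FormalMultilinearSeries.ofScalars ℂ c) 0 := by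
  obtain ⟨ε, hε, hb⟩ := Metric.eventually_nhds_iff_ball.mp h
  have hε2 : (0 : ℝ) < ε / 2 := by linarith
  refine ⟨ENNReal.ofReal (ε / 2), ?_, ?_, ?_⟩
  · -- radius
    have hmem : ((ε / 2 : ℝ) : ℂ) ∈ Metric.ball (0 : ℂ) ε := by
      simp only [Metric.mem_ball, dist_zero_right, Complex.norm_real, Real.norm_eq_abs,
        abs_of_pos hε2]
      linarith
    have hs := (hb _ hmem).summable.tendsto_atTop_zero.norm
    rw [norm_zero] at hs
    have : ENNReal.ofReal (ε / 2) = ((ε / 2).toNNReal : ENNReal) := rfl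
    rw [this]
    refine FormalMultilinearSeries.le_radius_of_tendsto _ (l := 0) ?_
    convert hs using 2 with n
    rw [FormalMultilinearSeries.ofScalars_norm, norm_mul, norm_pow, Complex.norm_real,
      Real.norm_eq_abs, abs_of_pos hε2, Real.coe_toNNReal _ hε2.le]
  · exact ENNReal.ofReal_pos.mpr hε2
  · intro y hy
    have hy' : y ∈ Metric.ball (0 : ℂ) ε := by
      rw [EMetric.mem_ball, edist_zero_right, ← ofReal_norm] at hy
      have := (ENNReal.ofReal_lt_ofReal_iff hε2).mp hy
      simp only [Metric.mem_ball, dist_zero_right]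
      calc ‖y‖ ≤ (‖y‖₊ : ℝ) := by simp
        _ < ε / 2 := by simpa using this
        _ < ε := by linarith
    have heq : (fun n => FormalMultilinearSeries.ofScalars ℂ c n fun _ => y)
        = fun n => c n * y ^ n := by
      funext n
      rw [FormalMultilinearSeries.ofScalars_apply_eq, smul_eq_mul]
    rw [zero_add, heq]
    exact hb y hy'

set_option maxHeartbeats 2000000 in
lemma key (z : ℂ) (hz : z ≠ 1) :
    ∀ᶠ x : ℂ in nhds 0, HasSum (fun m : ℕ =>
      (∑ k ∈ range (m + 1),
        ((-1 : ℂ) ^ k * (k.factorial : ℂ) / (z - 1) ^ (k + 1)) * z ^ k * (stirling m k : ℂ))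
        * x ^ m / (m.factorial : ℂ)) (1 / (z * Complex.exp x - 1)) := by
  have hz1 : z - 1 ≠ 0 := sub_ne_zero.mpr hz
  set a : ℝ := ‖z‖ / ‖z - 1‖ with ha
  have ha0 : 0 ≤ a := div_nonneg (norm_nonneg _) (norm_nonneg _)
  have hc1 : Tendsto (fun x : ℂ => a * (Real.exp ‖x‖ - 1)) (nhds 0) (nhds 0) := by
    have : Continuous fun x : ℂ => a * (Real.exp ‖x‖ - 1) :=
      continuous_const.mul ((Real.continuous_exp.comp continuous_norm).sub continuous_const)
    have h := this.tendsto 0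
    simpa using h
  have hc2 : Tendsto (fun x : ℂ => a * ‖Complex.exp x - 1‖) (nhds 0) (nhds 0) := by
    have : Continuous fun x : ℂ => a * ‖Complex.exp x - 1‖ :=
      continuous_const.mul (Complex.continuous_exp.sub continuous_const).norm
    have h := this.tendsto 0
    simpa using h
  filter_upwards [hc1.eventually_lt_const one_pos, hc2.eventually_lt_const one_pos] with x hx1 hx2
  -- the double-indexed family
  set g : ℕ × ℕ → ℂ := fun p =>
    ((-1 : ℂ) ^ p.1 * z ^ p.1 / (z - 1) ^ (p.1 + 1)) *
      (((stirling p.2 p.1 * (p.1).factorial : ℕ) : ℂ) * x ^ p.2 / ((p.2).factorial : ℂ)) with hg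
  -- fibers over k
  have hfib : ∀ k : ℕ, HasSum (fun m => g (k, m))
      (((-1 : ℂ) ^ k * z ^ k / (z - 1) ^ (k + 1)) * (Complex.exp x - 1) ^ k) :=
    fun k => (egf' k x).mul_left _
  -- geometric series
  set w : ℂ := -(z * (Complex.exp x - 1)) / (z - 1) with hwdef
  have hw : ‖w‖ < 1 := by
    rw [hwdef, norm_div, norm_neg, norm_mul]
    calc ‖z‖ * ‖Complex.exp x - 1‖ / ‖z - 1‖ = a * ‖Complex.exp x - 1‖ := by rw [ha]; ring
      _ < 1 := hx2
  have hgeom : HasSum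
      (fun k => ((-1 : ℂ) ^ k * z ^ k / (z - 1) ^ (k + 1)) * (Complex.exp x - 1) ^ k)
      (1 / (z * Complex.exp x - 1)) := by
    have h := (hasSum_geometric_of_norm_lt_one hw).mul_left (1 / (z - 1))
    have hterm : ∀ k : ℕ, 1 / (z - 1) * w ^ k
        = ((-1 : ℂ) ^ k * z ^ k / (z - 1) ^ (k + 1)) * (Complex.exp x - 1) ^ k := by
      intro k
      rw [hwdef, div_pow, ← neg_one_mul, mul_pow, mul_pow, pow_succ]
      field_simp
    have hval : 1 / (z - 1) * (1 - w)⁻¹ = 1 / (z * Complex.exp x - 1) := by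
      rw [hwdef, one_div, one_div, ← mul_inv]
      congr 1
      field_simp
      ring
    rw [hval] at h
    exact h.congr_fun fun k => (hterm k).symm
  -- norms of the family
  have hnorm : ∀ p : ℕ × ℕ, ‖g p‖
      = (‖z‖ ^ p.1 / ‖z - 1‖ ^ (p.1 + 1)) *
        (((stirling p.2 p.1 * (p.1).factorial : ℕ) : ℝ) * ‖x‖ ^ p.2 / ((p.2).factorial : ℝ)) := by
    intro p
    rw [hg]
    simp only [norm_mul, norm_div, norm_pow, norm_neg, norm_one, one_pow, one_mul,
      Complex.norm_natCast]
  -- fiberwise sums of norms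
  have hfibR : ∀ k : ℕ, HasSum (fun m => ‖g (k, m)‖)
      ((‖z‖ ^ k / ‖z - 1‖ ^ (k + 1)) * (Real.exp ‖x‖ - 1) ^ k) := by
    intro k
    have h := (egfR k ‖x‖).mul_left (‖z‖ ^ k / ‖z - 1‖ ^ (k + 1))
    exact h.congr_fun fun m => by rw [hnorm (k, m)]
  -- summability of norms over the product
  have hsumnorm : Summable fun p : ℕ × ℕ => ‖g p‖ := by
    refine (summable_prod_of_nonneg fun p => norm_nonneg _).mpr ⟨fun k => (hfibR k).summable, ?_⟩
    have hge : Summable fun k : ℕ => (1 / ‖z - 1‖) * (a * (Real.exp ‖x‖ - 1)) ^ k := by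
      refine Summable.mul_left _ (summable_geometric_of_lt_one ?_ hx1)
      have : (1 : ℝ) ≤ Real.exp ‖x‖ := by
        rw [← Real.exp_zero]
        exact Real.exp_le_exp.mpr (norm_nonneg _)
      exact mul_nonneg ha0 (by linarith)
    refine hge.congr fun k => ?_
    rw [(hfibR k).tsum_eq, ha, mul_pow, div_pow, pow_succ]
    have hz1' : ‖z - 1‖ ≠ 0 := norm_ne_zero_iff.mpr hz1
    field_simp
  have hG : HasSum g (∑' p, g p) := hsumnorm.of_norm.hasSum
  -- identify the total sum via k-fibers
  have hcol : HasSum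
      (fun k => ((-1 : ℂ) ^ k * z ^ k / (z - 1) ^ (k + 1)) * (Complex.exp x - 1) ^ k)
      (∑' p, g p) := hG.prod_fiberwise hfib
  have hSval : (∑' p, g p) = 1 / (z * Complex.exp x - 1) := hcol.unique hgeom
  -- refiber over m
  have hswap : HasSum (fun p : ℕ × ℕ => g (p.2, p.1)) (∑' p, g p) :=
    (Equiv.prodComm ℕ ℕ).hasSum_iff.mpr hG
  have hfibm : ∀ m : ℕ, HasSum (fun k => g (k, m)) (∑ k ∈ range (m + 1), g (k, m)) := by
    intro m
    refine hasSum_sum_of_ne_finset_zero fun k hk => ?_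
    have hmk : m < k := by simpa using hk
    rw [hg]
    simp [stirling_eq_zero m k hmk]
  have hrow : HasSum (fun m => ∑ k ∈ range (m + 1), g (k, m)) (∑' p, g p) :=
    hswap.prod_fiberwise fun m => hfibm m
  rw [hSval] at hrow
  refine hrow.congr_fun fun m => ?_
  rw [Finset.sum_mul, Finset.sum_div]
  refine (Finset.sum_congr rfl fun k hk => ?_).symm
  rw [hg]
  push_cast
  ring

set_option maxHeartbeats 1000000 in
theorem apostolBernoulli_number_closed_form (z : ℂ) (hz : z ≠ 1) (B : ℕ → ℂ → ℂ)
    (hB : ∀ u : ℂ, ∀ᶠ x : ℂ in nhds 0,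
      HasSum (fun m : ℕ => B m u * x ^ m / (m.factorial : ℂ))
        (x * Complex.exp (u * x) / (z * Complex.exp x - 1)))
    (n : ℕ) (hn : 1 ≤ n) :
    B n 0 = (n : ℂ) * ∑ k ∈ Finset.range n,
      ((-1 : ℂ) ^ k * (k.factorial : ℂ) / (z - 1) ^ (k + 1)) * z ^ k *
        (stirling (n - 1) k : ℂ) := by
  have hz1 : z - 1 ≠ 0 := sub_ne_zero.mpr hz
  set D : ℕ → ℂ := fun n => (n : ℂ) * ∑ k ∈ Finset.range n,
      ((-1 : ℂ) ^ k * (k.factorial : ℂ) / (z - 1) ^ (k + 1)) * z ^ k *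
        (stirling (n - 1) k : ℂ) with hD
  have hDsum : ∀ᶠ x : ℂ in nhds 0, HasSum (fun n : ℕ => (D n / (n.factorial : ℂ)) * x ^ n)
      (x / (z * Complex.exp x - 1)) := by
    filter_upwards [key z hz] with x hx
    have h1 := hx.mul_left x
    rw [mul_one_div] at h1
    have h2 : ∀ m : ℕ, x * ((∑ k ∈ range (m + 1),
        ((-1 : ℂ) ^ k * (k.factorial : ℂ) / (z - 1) ^ (k + 1)) * z ^ k * (stirling m k : ℂ))
          * x ^ m / (m.factorial : ℂ))
        = (D (m + 1) / ((m + 1).factorial : ℂ)) * x ^ (m + 1) := by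
      intro m
      rw [hD]
      simp only [Nat.add_sub_cancel]
      rw [Nat.factorial_succ]
      have hfac : ((m.factorial : ℂ)) ≠ 0 := Nat.cast_ne_zero.mpr (Nat.factorial_ne_zero m)
      have hm1 : ((m : ℂ) + 1) ≠ 0 := Nat.cast_add_one_ne_zero m
      push_cast
      field_simp
      ring
    have h3 : HasSum (fun m : ℕ => (D (m + 1) / ((m + 1).factorial : ℂ)) * x ^ (m + 1))
        (x / (z * Complex.exp x - 1)) := h1.congr_fun fun m => (h2 m).symm
    have h4 := (hasSum_nat_add_iff
      (f := fun n : ℕ => (D n / (n.factorial : ℂ)) * x ^ n) 1).mp h3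
    simpa [hD] using h4
  have hBsum : ∀ᶠ x : ℂ in nhds 0, HasSum (fun n : ℕ => (B n 0 / (n.factorial : ℂ)) * x ^ n)
      (x / (z * Complex.exp x - 1)) := by
    filter_upwards [hB 0] with x hx
    have he : (fun m : ℕ => B m 0 * x ^ m / (m.factorial : ℂ))
        = fun m => (B m 0 / (m.factorial : ℂ)) * x ^ m := by
      funext m; ring
    rw [he] at hx
    simpa [Complex.exp_zero] using hx
  have hp := hasFPowerSeriesAt_of_eventually hBsum
  have hq := hasFPowerSeriesAt_of_eventually hDsum
  have heq := hp.eq_formalMultilinearSeries hq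
  rw [FormalMultilinearSeries.ofScalars_series_eq_iff] at heq
  have h := congrFun heq n
  have hfac : ((n.factorial : ℂ)) ≠ 0 := Nat.cast_ne_zero.mpr (Nat.factorial_ne_zero n)
  rw [div_eq_div_iff hfac hfac] at h
  have hBD : B n 0 = D n := mul_right_cancel₀ hfac h
  rw [hBD]
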